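/- Model checking over the SNM is strictly cheaper than over the translated Kripke model: let SN be a social network model and φ a KBL formula such that outerK(φ) is nonempty and KB_i is nonempty for every agent i with some K_i φ_i ∈ outerK(φ); then Σ_{K_i φ_i ∈ outerK(φ)} 2^{|φ_{KB_i}|} · |φ_i| < 2^{|φ_SN|} · |φ^K|. -/

import Mathlib

/-- KBL formulas: atomic predicates (predicate symbol applied to terms of the
finite domain, folded into the type `Pred`), connection atoms, action atoms,
negation, conjunction and knowledge modalities. -/
inductive Formula (Ag Pred Conn Act : Type) : Type
  | atom : Pred → Formula Ag Pred Conn Act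
  | conn : Conn → Ag → Ag → Formula Ag Pred Conn Act
  | act  : Act → Ag → Ag → Formula Ag Pred Conn Act
  | neg  : Formula Ag Pred Conn Act → Formula Ag Pred Conn Act
  | and  : Formula Ag Pred Conn Act → Formula Ag Pred Conn Act → Formula Ag Pred Conn Act
  | know : Ag → Formula Ag Pred Conn Act → Formula Ag Pred Conn Act
  deriving DecidableEq

variable {Ag Pred Conn Act : Type}

/-- Material implication, encoded classically. -/
def Formula.imp (φ ψ : Formula Ag Pred Conn Act) : Formula Ag Pred Conn Act :=
  Formula.neg (Formula.and φ (Formula.neg ψ))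

/-- Propositional formulas, used to define substitution instances of
propositional tautologies (axiom A1). -/
inductive PropForm : Type
  | var : ℕ → PropForm
  | neg : PropForm → PropForm
  | and : PropForm → PropForm → PropForm

def PropForm.eval (v : ℕ → Bool) : PropForm → Bool
  | .var n => v n
  | .neg p => !(p.eval v)
  | .and p q => p.eval v && q.eval v

/-- A propositional tautology. -/
def PropForm.Taut (p : PropForm) : Prop := ∀ v, p.eval v = true

def PropForm.subst (σ : ℕ → Formula Ag Pred Conn Act) : PropForm → Formula Ag Pred Conn Act
  | .var n => σ n
  | .neg p => Formula.neg (p.subst σ)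
  | .and p q => Formula.and (p.subst σ) (q.subst σ)

/-- A KBL formula that is a substitution instance of a propositional tautology. -/
def Formula.IsTautInstance (φ : Formula Ag Pred Conn Act) : Prop :=
  ∃ (p : PropForm) (σ : ℕ → Formula Ag Pred Conn Act), p.Taut ∧ p.subst σ = φ

/-- KD4-derivability `Γ ⊢ φ`: assumptions, propositional tautologies (A1),
distribution (A2), positive introspection (A4), consistency (D, with falsum
taken as a contradictory formula `φ ∧ ¬φ`), modus ponens (R1) and
necessitation from the empty set of assumptions (R2). -/
inductive Deriv : Set (Formula Ag Pred Conn Act) → Formula Ag Pred Conn Act → Prop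
  | mem {Γ} {φ : Formula Ag Pred Conn Act} : φ ∈ Γ → Deriv Γ φ
  | taut {Γ} {φ : Formula Ag Pred Conn Act} : φ.IsTautInstance → Deriv Γ φ
  | a2 (Γ) (i : Ag) (φ ψ : Formula Ag Pred Conn Act) :
      Deriv Γ (Formula.imp
        (Formula.and (Formula.know i φ) (Formula.know i (Formula.imp φ ψ)))
        (Formula.know i ψ))
  | a4 (Γ) (i : Ag) (φ : Formula Ag Pred Conn Act) :
      Deriv Γ (Formula.imp (Formula.know i φ) (Formula.know i (Formula.know i φ)))
  | dax (Γ) (i : Ag) (φ : Formula Ag Pred Conn Act) :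
      Deriv Γ (Formula.neg (Formula.know i (Formula.and φ (Formula.neg φ))))
  | mp {Γ} {φ ψ : Formula Ag Pred Conn Act} :
      Deriv Γ (Formula.imp φ ψ) → Deriv Γ φ → Deriv Γ ψ
  | nec (Γ) (i : Ag) {φ : Formula Ag Pred Conn Act} :
      Deriv (∅ : Set (Formula Ag Pred Conn Act)) φ → Deriv Γ (Formula.know i φ)

/-- A social network model: connection relations, permitted-action relations,
a finite knowledge base for every agent, and the environment's knowledge base
(the set of true atomic predicates). -/
structure SNM (Ag Pred Conn Act : Type) where
  conn : Conn → Ag → Ag → Prop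
  act : Act → Ag → Ag → Prop
  KB : Ag → Finset (Formula Ag Pred Conn Act)
  KBe : Finset Pred

/-- Satisfaction of a KBL formula in a social network model. -/
def SNM.Sat (SN : SNM Ag Pred Conn Act) : Formula Ag Pred Conn Act → Prop
  | .atom p => p ∈ SN.KBe
  | .conn m i j => SN.conn m i j
  | .act n i j => SN.act n i j
  | .neg φ => ¬ SN.Sat φ
  | .and φ ψ => SN.Sat φ ∧ SN.Sat ψ
  | .know i φ => Deriv (↑(SN.KB i) : Set (Formula Ag Pred Conn Act)) φ

/-- Knowledge consistency of the knowledge bases of an SNM. -/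
def SNM.KnowConsistent (SN : SNM Ag Pred Conn Act) : Prop :=
  ∀ (i : Ag) (φ : Formula Ag Pred Conn Act),
    Deriv (↑(SN.KB i) : Set (Formula Ag Pred Conn Act)) φ →
    ¬ Deriv (↑(SN.KB i) : Set (Formula Ag Pred Conn Act)) (Formula.neg φ)

/-- Self-awareness of the knowledge bases of an SNM. -/
def SNM.SelfAware (SN : SNM Ag Pred Conn Act) : Prop :=
  ∀ (i : Ag) (φ : Formula Ag Pred Conn Act),
    Deriv (↑(SN.KB i) : Set (Formula Ag Pred Conn Act)) φ →
    Deriv (↑(SN.KB i) : Set (Formula Ag Pred Conn Act)) (Formula.know i φ)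

/-- Conjunction of a nonempty list of formulas (head `a`, tail `l`). -/
def conjNE (a : Formula Ag Pred Conn Act) (l : List (Formula Ag Pred Conn Act)) :
    Formula Ag Pred Conn Act :=
  l.foldl Formula.and a

/-- The characteristic set `Φ_SN` of a social network model. -/
def SNM.CharSet (SN : SNM Ag Pred Conn Act) : Set (Formula Ag Pred Conn Act) :=
  {ψ | ∃ p ∈ SN.KBe, ψ = Formula.atom p} ∪
  {ψ | ∃ (i : Ag) (φ : Formula Ag Pred Conn Act), φ ∈ SN.KB i ∧ ψ = Formula.know i φ} ∪
  {ψ | ∃ (m : Conn) (i j : Ag), SN.conn m i j ∧ ψ = Formula.conn m i j} ∪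
  {ψ | ∃ (n : Act) (i j : Ag), SN.act n i j ∧ ψ = Formula.act n i j}

/-- A formula is KD4-consistent when its negation is not derivable from no
assumptions. -/
def KD4Consistent (φ : Formula Ag Pred Conn Act) : Prop :=
  ¬ Deriv (∅ : Set (Formula Ag Pred Conn Act)) (Formula.neg φ)

/-- A set of formulas is KD4-consistent when no contradiction is derivable from it. -/
def SetKD4Consistent (Γ : Set (Formula Ag Pred Conn Act)) : Prop :=
  ∀ ψ : Formula Ag Pred Conn Act, ¬ (Deriv Γ ψ ∧ Deriv Γ (Formula.neg ψ))

/-- Subformulas of a formula (including the formula itself). -/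
def Formula.sub : Formula Ag Pred Conn Act → Set (Formula Ag Pred Conn Act)
  | .atom p => {Formula.atom p}
  | .conn m i j => {Formula.conn m i j}
  | .act n i j => {Formula.act n i j}
  | .neg φ => insert (Formula.neg φ) φ.sub
  | .and φ ψ => insert (Formula.and φ ψ) (φ.sub ∪ ψ.sub)
  | .know i φ => insert (Formula.know i φ) φ.sub

/-- `Sub⁺(φ)`: subformulas of `φ` together with their negations. -/
def SubPlus (φ : Formula Ag Pred Conn Act) : Set (Formula Ag Pred Conn Act) :=
  φ.sub ∪ (Formula.neg '' φ.sub)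

/-- `Con(φ)` (named `ConKD4`): maximal KD4-consistent subsets of `Sub⁺(φ)`. -/
def ConKD4 (φ : Formula Ag Pred Conn Act) : Set (Set (Formula Ag Pred Conn Act)) :=
  {Θ | Θ ⊆ SubPlus φ ∧ SetKD4Consistent Θ ∧
    ∀ ψ ∈ SubPlus φ, ψ ∉ Θ → ¬ SetKD4Consistent (insert ψ Θ)}

/-- `Θ/K_i = {ψ | K_i ψ ∈ Θ}`. -/
def projK (i : Ag) (Θ : Set (Formula Ag Pred Conn Act)) : Set (Formula Ag Pred Conn Act) :=
  {ψ | Formula.know i ψ ∈ Θ}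

/-- Kripke models: states, a valuation assigning truth values of atomic
formulas at each state, and accessibility relations. -/
structure Kripke (Ag Pred Conn Act : Type) where
  State : Type
  val : State → Formula Ag Pred Conn Act → Prop
  acc : Ag → State → State → Prop

/-- The canonical Kripke model `M_φ` of a (KD4-consistent) formula `φ`. -/
def canonical (φ : Formula Ag Pred Conn Act) : Kripke Ag Pred Conn Act where
  State := {Θ : Set (Formula Ag Pred Conn Act) // Θ ∈ ConKD4 φ}
  val := fun s ψ => ψ ∈ s.1
  acc := fun i s t => projK i s.1 ⊆ projK i t.1 ∧ projK i s.1 ⊆ t.1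

/-- Satisfaction of a formula at a state of a Kripke model. -/
def KSat (M : Kripke Ag Pred Conn Act) : M.State → Formula Ag Pred Conn Act → Prop
  | s, .atom p => M.val s (Formula.atom p)
  | s, .conn m i j => M.val s (Formula.conn m i j)
  | s, .act n i j => M.val s (Formula.act n i j)
  | s, .neg ψ => ¬ KSat M s ψ
  | s, .and ψ χ => KSat M s ψ ∧ KSat M s χ
  | s, .know i ψ => ∀ t, M.acc i s t → KSat M t ψ

/-- Length (number of symbols) of a formula; atoms count as one symbol. -/
def Formula.len : Formula Ag Pred Conn Act → ℕ
  | .atom _ => 1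
  | .conn _ _ _ => 1
  | .act _ _ _ => 1
  | .neg φ => φ.len + 1
  | .and φ ψ => φ.len + ψ.len + 1
  | .know _ φ => φ.len + 1

/-- `outerK(φ)`: the subformulas of `φ` of the form `K_i ψ` that are not under
the scope of any knowledge modality. -/
def outerK : Formula Ag Pred Conn Act → List (Formula Ag Pred Conn Act)
  | .neg φ => outerK φ
  | .and φ ψ => outerK φ ++ outerK ψ
  | .know i φ => [Formula.know i φ]
  | .atom _ => []
  | .conn _ _ _ => []
  | .act _ _ _ => []

/-- The length of the conjunction of the formulas of a list: the lengths of
the conjuncts plus one symbol for each `∧`. -/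
def conjLen (l : List (Formula Ag Pred Conn Act)) : ℕ :=
  (l.map Formula.len).sum + (l.length - 1)

/-- model checking over the SNM is strictly cheaper than over
the translated Kripke model. Here `L` is a duplicate-free enumeration of the
characteristic set `Φ_SN` (so `conjLen L = |φ_SN|`), `kb i` is a
duplicate-free enumeration of `KB_i` (so `conjLen (kb i) = |φ_{KB_i}|`), and
`conjLen (outerK φ).dedup = |φ^K|`. If `outerK φ` is nonempty and `KB_i` is
nonempty for every agent `i` with some `K_i φ_i ∈ outerK(φ)`, then
`Σ_{K_i φ_i ∈ outerK(φ)} 2 ^ |φ_{KB_i}| · |φ_i| < 2 ^ |φ_SN| · |φ^K|`. -/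

lemma outerK_shape (φ : Formula Ag Pred Conn Act) :
    ∀ χ ∈ outerK φ, ∃ i ψ, χ = Formula.know i ψ := by
  induction φ with
  | neg φ ih => exact ih
  | and φ ψ ih1 ih2 =>
      intro χ h
      rcases List.mem_append.mp h with h | h
      exacts [ih1 χ h, ih2 χ h]
  | know i φ =>
      intro χ h
      simp only [outerK, List.mem_singleton] at h
      exact ⟨i, φ, h⟩
  | atom p => simp [outerK]
  | conn m i j => simp [outerK]
  | act n i j => simp [outerK]

lemma sum_map_add_const {α : Type*} (l : List α) (f : α → ℕ) (c : ℕ) :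
    (l.map (fun a => f a + c)).sum = (l.map f).sum + c * l.length := by
  induction l with
  | nil => simp
  | cons a l ih => simp [ih]; ring

theorem snm_model_checking_cheaper
    {Ag Pred Conn Act : Type}
    [DecidableEq Ag] [DecidableEq Pred] [DecidableEq Conn] [DecidableEq Act]
    [Fintype Ag] [Fintype Conn] [Fintype Act]
    (SN : SNM Ag Pred Conn Act) (φ : Formula Ag Pred Conn Act)
    (L : List (Formula Ag Pred Conn Act)) (hLnd : L.Nodup)
    (hL : ∀ ψ : Formula Ag Pred Conn Act, ψ ∈ L ↔ ψ ∈ SN.CharSet)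
    (kb : Ag → List (Formula Ag Pred Conn Act)) (hkbnd : ∀ i, (kb i).Nodup)
    (hkb : ∀ (i : Ag) (ψ : Formula Ag Pred Conn Act), ψ ∈ kb i ↔ ψ ∈ SN.KB i)
    (hout : outerK φ ≠ [])
    (hne : ∀ (i : Ag) (ψ : Formula Ag Pred Conn Act),
      Formula.know i ψ ∈ outerK φ → kb i ≠ []) :
    ((outerK φ).dedup.map (fun χ =>
        match χ with
        | Formula.know i ψ => 2 ^ conjLen (kb i) * ψ.len
        | _ => 0)).sum
      < 2 ^ conjLen L * conjLen (outerK φ).dedup := by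
  set D := (outerK φ).dedup with hD
  set c := conjLen L with hc
  set f : Formula Ag Pred Conn Act → ℕ := fun χ =>
      match χ with
      | Formula.know i ψ => 2 ^ conjLen (kb i) * ψ.len
      | _ => 0 with hf
  -- Step 1: conjLen (kb i) ≤ c for relevant i
  have hKBle : ∀ i ψ, Formula.know i ψ ∈ outerK φ → conjLen (kb i) ≤ c := by
    intro i ψ _
    set S := (kb i).map (Formula.know i) with hS
    have hSnd : S.Nodup := (hkbnd i).map (fun a b hab => by injection hab)
    have hSsub : S.toFinset ⊆ L.toFinset := by
      intro x hx
      rw [List.mem_toFinset] at hx ⊢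
      rcases List.mem_map.mp hx with ⟨χ, hχ, rfl⟩
      rw [hL]
      exact Or.inl (Or.inl (Or.inr ⟨i, χ, (hkb i χ).mp hχ, rfl⟩))
    have hsum : (S.map Formula.len).sum ≤ (L.map Formula.len).sum := by
      rw [← List.sum_toFinset _ hSnd, ← List.sum_toFinset _ hLnd]
      exact Finset.sum_le_sum_of_subset hSsub
    have hSlen : (S.map Formula.len).sum
        = ((kb i).map Formula.len).sum + 1 * (kb i).length := by
      rw [hS, List.map_map]
      rw [show (Formula.len ∘ Formula.know i)
            = fun χ : Formula Ag Pred Conn Act => Formula.len χ + 1 from rfl]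
      exact sum_map_add_const _ _ 1
    calc conjLen (kb i) = ((kb i).map Formula.len).sum + ((kb i).length - 1) := rfl
      _ ≤ ((kb i).map Formula.len).sum + 1 * (kb i).length := by
          omega
      _ = (S.map Formula.len).sum := hSlen.symm
      _ ≤ (L.map Formula.len).sum := hsum
      _ ≤ conjLen L := Nat.le_add_right _ _
  -- Step 2: pointwise bound
  have hpt : ∀ χ ∈ D, f χ + 2 ^ c ≤ 2 ^ c * χ.len := by
    intro χ hχ
    have hχ' : χ ∈ outerK φ := List.mem_dedup.mp hχ
    obtain ⟨i, ψ, rfl⟩ := outerK_shape φ χ hχ'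
    have h1 : (2:ℕ) ^ conjLen (kb i) ≤ 2 ^ c :=
      Nat.pow_le_pow_right (by norm_num) (hKBle i ψ hχ')
    have : f (Formula.know i ψ) = 2 ^ conjLen (kb i) * ψ.len := rfl
    rw [this]
    have hlen : (Formula.know i ψ).len = ψ.len + 1 := rfl
    rw [hlen, Nat.mul_add, Nat.mul_one]
    exact Nat.add_le_add_right (Nat.mul_le_mul_right _ h1) _
  -- Step 3: sum the pointwise bounds
  have hsum1 : (D.map (fun χ => f χ + 2 ^ c)).sum
      ≤ (D.map (fun χ => 2 ^ c * χ.len)).sum :=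
    List.sum_le_sum hpt
  have hsum2 : (D.map f).sum + 2 ^ c * D.length
      = (D.map (fun χ => f χ + 2 ^ c)).sum := (sum_map_add_const D f (2 ^ c)).symm
  have hsum3 : (D.map (fun χ => 2 ^ c * χ.len)).sum
      = 2 ^ c * (D.map Formula.len).sum := by
    rw [← List.sum_map_mul_left]
  have hDlen : 1 ≤ D.length := by
    have : D ≠ [] := by
      rw [hD]; simpa [List.dedup_eq_nil] using hout
    exact List.length_pos_iff.mpr this
  have hfinal : (D.map Formula.len).sum ≤ conjLen D := Nat.le_add_right _ _
  have hpos : 0 < 2 ^ c * D.length :=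
    Nat.mul_pos (Nat.pow_pos (by norm_num)) hDlen
  calc (D.map f).sum < (D.map f).sum + 2 ^ c * D.length := Nat.lt_add_of_pos_right hpos
    _ ≤ 2 ^ c * (D.map Formula.len).sum := by rw [hsum2, ← hsum3] at *; exact hsum1
    _ ≤ 2 ^ c * conjLen D := Nat.mul_le_mul_left _ hfinal
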